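/- For every positive integer i and every real number t ≠ 0, the i-th derivative of the function h(t) = e^{1/t} is given by h^{(i)}(t) = (-1)^i e^{1/t} t^{-2i} Σ_{k=0}^{i-1} a_{i,k} t^k, where a_{i,k} = C(i,k) · C(i-1,k) · k! and C(n,m) denotes the binomial coefficient. -/

import Mathlib

noncomputable def A (i k : ℕ) : ℝ := (i.choose k) * ((i-1).choose k) * (k.factorial)

lemma A_succ (i l : ℕ) (h : l < i) :
    A (i+1) (l+1) = A i (l+1) + ((2*i:ℝ) - l) * A i l := by
  obtain ⟨m, rfl⟩ : ∃ m, i = l + 1 + m := ⟨i - (l+1), by omega⟩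
  cases m with
  | zero =>
    simp only [A, Nat.add_zero, Nat.add_sub_cancel, Nat.choose_self,
      Nat.choose_succ_self_right, Nat.choose_eq_zero_of_lt (Nat.lt_succ_self l),
      Nat.factorial_succ]
    push_cast
    ring
  | succ m =>
    have e : l + 1 + (m+1) = l + m + 2 := by ring
    rw [e]
    simp only [A, show l + m + 2 + 1 - 1 = l + m + 2 from rfl,
      show l + m + 2 - 1 = l + m + 1 from rfl]
    rw [show l + m + 2 + 1 = l + m + 3 from rfl]
    rw [Nat.cast_choose ℝ (show l+1 ≤ l+m+3 by omega),
        Nat.cast_choose ℝ (show l+1 ≤ l+m+2 by omega),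
        Nat.cast_choose ℝ (show l+1 ≤ l+m+1 by omega),
        Nat.cast_choose ℝ (show l ≤ l+m+2 by omega),
        Nat.cast_choose ℝ (show l ≤ l+m+1 by omega),
        show l+m+3 - (l+1) = m+2 from by omega,
        show l+m+2 - (l+1) = m+1 from by omega,
        show l+m+1 - (l+1) = m from by omega,
        show l+m+2 - l = m+2 from by omega,
        show l+m+1 - l = m+1 from by omega]
    rw [show (l+m+3) = (l+m+2)+1 from rfl, Nat.factorial_succ (l+m+2),
        show (l+m+2) = (l+m+1)+1 from rfl, Nat.factorial_succ (l+m+1),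
        Nat.factorial_succ (m+1), Nat.factorial_succ m, Nat.factorial_succ l]
    have h1 : ((l+m+1).factorial : ℝ) ≠ 0 := by positivity
    have h2 : (l.factorial : ℝ) ≠ 0 := by positivity
    have h3 : (m.factorial : ℝ) ≠ 0 := by positivity
    push_cast
    field_simp
    ring

lemma key_sum (i : ℕ) (hi : 1 ≤ i) (t : ℝ) :
    ∑ k ∈ Finset.range (i+1), A (i+1) k * t^k
      = ∑ k ∈ Finset.range i, A i k * t^k
        + ∑ k ∈ Finset.range i, ((2*i:ℝ) - k) * A i k * t^(k+1) := by
  have hAi : A i i = 0 := by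
    simp [A, Nat.choose_eq_zero_of_lt (show i - 1 < i by omega)]
  have h1 : (∑ k ∈ Finset.range i, A i k * t^k)
      = ∑ k ∈ Finset.range (i+1), A i k * t^k := by
    rw [Finset.sum_range_succ, hAi]; ring
  rw [h1, Finset.sum_range_succ', Finset.sum_range_succ']
  have h2 : ∀ k ∈ Finset.range i,
      A (i+1) (k+1) * t^(k+1)
        = A i (k+1) * t^(k+1) + ((2*i:ℝ) - k) * A i k * t^(k+1) := by
    intro k hk
    rw [A_succ i k (Finset.mem_range.mp hk)]; ring
  rw [Finset.sum_congr rfl h2, Finset.sum_add_distrib]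
  simp [A]
  ring

lemma S_eq (i : ℕ) (t : ℝ) :
    ∑ k ∈ Finset.range i, ((2*i:ℝ) - k) * A i k * t^(k+1)
      = (2*i:ℝ)*t*(∑ k ∈ Finset.range i, A i k * t^k)
        - t^2 * ∑ k ∈ Finset.range i, A i k * ((k:ℝ) * t^(k-1)) := by
  rw [Finset.mul_sum, Finset.mul_sum, ← Finset.sum_sub_distrib]
  refine Finset.sum_congr rfl fun k _ => ?_
  cases k with
  | zero => simp; ring
  | succ k => simp [pow_succ]; ring

lemma hasDerivAt_exp_inv {t : ℝ} (ht : t ≠ 0) :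
    HasDerivAt (fun x : ℝ => Real.exp (1/x)) (Real.exp (1/t) * (-(1/t^2))) t := by
  have hinv : HasDerivAt (fun x : ℝ => 1/x) (-(1/t^2)) t := by
    simpa [one_div] using hasDerivAt_inv ht
  exact (Real.hasDerivAt_exp (1/t)).comp t hinv

lemma main_aux (i : ℕ) (hi : 1 ≤ i) (t : ℝ) (ht : t ≠ 0) :
    iteratedDeriv i (fun x : ℝ => Real.exp (1 / x)) t =
      (-1 : ℝ) ^ i * Real.exp (1 / t) / t ^ (2 * i) *
        ∑ k ∈ Finset.range i, A i k * t ^ k := by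
  induction i, hi using Nat.le_induction generalizing t with
  | base =>
    rw [iteratedDeriv_one, (hasDerivAt_exp_inv ht).deriv]
    simp [A]
    ring
  | succ i hi IH =>
    rw [iteratedDeriv_succ]
    set P : ℝ := ∑ k ∈ Finset.range i, A i k * t ^ k with hP
    set P' : ℝ := ∑ k ∈ Finset.range i, A i k * ((k:ℝ) * t ^ (k-1)) with hP'
    have hev : (iteratedDeriv i (fun x : ℝ => Real.exp (1 / x)))
        =ᶠ[nhds t] (fun x => (-1 : ℝ) ^ i * Real.exp (1 / x) / x ^ (2 * i) *
          ∑ k ∈ Finset.range i, A i k * x ^ k) := by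
      filter_upwards [isOpen_compl_singleton.mem_nhds ht] with x hx
      exact IH x hx
    rw [hev.deriv_eq]
    have hPd : HasDerivAt (fun x : ℝ => ∑ k ∈ Finset.range i, A i k * x ^ k) P' t :=
      HasDerivAt.fun_sum fun k _ => (hasDerivAt_pow k t).const_mul (A i k)
    have hg : HasDerivAt
        (fun x => (-1 : ℝ) ^ i * Real.exp (1 / x) / x ^ (2 * i) *
          ∑ k ∈ Finset.range i, A i k * x ^ k)
        ((((-1:ℝ)^i * (Real.exp (1/t) * (-(1/t^2)))) * t^(2*i)
            - ((-1:ℝ)^i * Real.exp (1/t)) * (((2*i : ℕ):ℝ) * t^(2*i-1))) / (t^(2*i))^2 * P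
          + (-1:ℝ)^i * Real.exp (1/t) / t^(2*i) * P') t := by
      exact ((((hasDerivAt_exp_inv ht).const_mul ((-1:ℝ)^i)).div
        (hasDerivAt_pow (2*i) t) (pow_ne_zero _ ht)).mul hPd)
    rw [hg.deriv]
    push_cast
    rw [key_sum i hi t, S_eq i t, ← hP, ← hP']
    obtain ⟨n, hn⟩ : ∃ n, 2*i = n+1 := ⟨2*i-1, by omega⟩
    rw [show 2*i-1 = n from by omega, show 2*(i+1) = n+3 from by omega, hn]
    have hn' : (2*(i:ℝ)) = (n:ℝ)+1 := by exact_mod_cast congrArg (Nat.cast : ℕ → ℝ) hn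
    rw [hn']
    have htn : t^(n+1) ≠ 0 := pow_ne_zero _ ht
    field_simp
    ring

/-- For every positive integer `i` and every real `t ≠ 0`, the
`i`-th derivative of `h(t) = exp (1/t)` equals
`(-1)^i * exp (1/t) / t^(2i) * ∑_{k=0}^{i-1} a_{i,k} t^k`,
where `a_{i,k} = C(i,k) * C(i-1,k) * k!`. -/
theorem iteratedDeriv_exp_one_div (i : ℕ) (hi : 1 ≤ i) (t : ℝ) (ht : t ≠ 0) :
    iteratedDeriv i (fun x : ℝ => Real.exp (1 / x)) t =
      (-1 : ℝ) ^ i * Real.exp (1 / t) / t ^ (2 * i) *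
        ∑ k ∈ Finset.range i,
          ((Nat.choose i k : ℝ) * (Nat.choose (i - 1) k : ℝ) * (Nat.factorial k : ℝ)) * t ^ k := by
  simpa [A] using main_aux i hi t ht
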